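/- Let R be a von Neumann regular ring and let a, b ∈ R with a² = a and b² = b. Let u be a quasi-inverse of b - ab and put d = u(b - ab). Then aR ∩ bR = (b - bd)R as right ideals of R. -/
import Mathlib

/-- The principal right ideal `xR` of a ring `R`, as a set. -/
def rIdeal {R : Type*} [Ring R] (x : R) : Set R := {y | ∃ r, y = x * r}

/-- In a von Neumann regular ring `R`, if `a² = a`, `b² = b`,
`u` is a quasi-inverse of `b - ab`, and `d = u(b - ab)`, then `aR ∩ bR = (b - bd)R`. -/
theorem stmt1 {R : Type*} [Ring R]
    (hreg : ∀ x : R, ∃ y : R, x * y * x = x)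
    (a b u : R) (ha : a * a = a) (hb : b * b = b)
    (hu : (b - a * b) * u * (b - a * b) = b - a * b)
    (d : R) (hd : d = u * (b - a * b)) :
    rIdeal a ∩ rIdeal b = rIdeal (b - b * d) := by
  have hcd : (b - a * b) * d = b - a * b := by
    rw [hd, ← mul_assoc]; exact hu
  ext x
  constructor
  · rintro ⟨⟨r, hr⟩, ⟨s, hs⟩⟩
    have hax : a * x = x := by rw [hr, ← mul_assoc, ha]
    have hbx : b * x = x := by rw [hs, ← mul_assoc, hb]
    have hdx : d * x = 0 := by
      have h0 : (b - a * b) * x = 0 := by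
        rw [sub_mul, mul_assoc, hbx, hax, sub_self]
      rw [hd, mul_assoc, h0, mul_zero]
    exact ⟨x, by rw [sub_mul, mul_assoc, hdx, mul_zero, sub_zero, hbx]⟩
  · rintro ⟨r, hr⟩
    have key : a * (b - b * d) = b - b * d := by
      linear_combination (norm := noncomm_ring) hcd
    refine ⟨⟨(b - b * d) * r, ?_⟩, ⟨(1 - d) * r, ?_⟩⟩
    · rw [hr, ← mul_assoc, key]
    · rw [hr]; noncomm_ring
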